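/- Suppose c satisfies (Reg) and (Twist), X is compact with Lipschitz boundary, μ = ρ dx with ρ ∈ C⁰(X) and spt μ ⊂ X, and μ satisfies a (1,1)-Poincaré–Wirtinger inequality. Let ψ₁, ψ₂ ∈ Ψ_c, where Ψ_c := {ψ ∈ ℝᴺ : ψ = (ψ^{c*})^{c†}}. Then ψ₁ − ψ₂ ∈ span(𝟙) if and only if G(ψ₁) = G(ψ₂). -/

import Mathlib

open MeasureTheory Metric Set Filter Bornology
open scoped RealInnerProductSpace ENNReal NNReal Topology symmDiff

noncomputable section

/-- Euclidean `n`-space. -/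
abbrev Euc (n : ℕ) : Type := EuclideanSpace ℝ (Fin n)

/-- The `c^*`-transform `ψ^{c^*}(x) = max_i (-c(x,y_i) - ψ^i)` of a dual vector `ψ`. -/
def cStar {n N : ℕ} (c : Euc n → Fin N → ℝ) (ψ : Fin N → ℝ) (x : Euc n) : ℝ :=
  ⨆ i, (-(c x i) - ψ i)

/-- The `i`-th Laguerre cell associated to the dual vector `ψ`. -/
def Lag {n N : ℕ} (X : Set (Euc n)) (c : Euc n → Fin N → ℝ) (ψ : Fin N → ℝ) (i : Fin N) :
    Set (Euc n) :=
  {x ∈ X | -(c x i) - ψ i = cStar c ψ x}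

/-- The map `G(ψ)^i = μ(Lag_i(ψ))`. -/
def Gmap {n N : ℕ} (μ : Measure (Euc n)) (X : Set (Euc n)) (c : Euc n → Fin N → ℝ)
    (ψ : Fin N → ℝ) (i : Fin N) : ℝ :=
  (μ (Lag X c ψ i)).toReal

/-- Condition (Reg): each `c(·, y_i)` is `C²`. -/
def Reg {n N : ℕ} (c : Euc n → Fin N → ℝ) : Prop :=
  ∀ i, ContDiff ℝ 2 fun x => c x i

/-- Condition (Twist): the gradients `∇_x c(x, y_i)` are pairwise distinct on `X`. -/
def Twist {n N : ℕ} (X : Set (Euc n)) (c : Euc n → Fin N → ℝ) : Prop :=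
  ∀ x ∈ X, ∀ i j : Fin N, i ≠ j →
    gradient (fun z => c z i) x ≠ gradient (fun z => c z j) x

/-- `X` has Lipschitz boundary: near every boundary point, `X` coincides with the epigraph
of a Lipschitz function over some hyperplane. -/
def HasLipschitzBoundary {n : ℕ} (X : Set (Euc n)) : Prop :=
  ∀ x ∈ frontier X, ∃ (v : Euc n) (g : Euc n → ℝ) (K : NNReal) (r : ℝ),
    0 < r ∧ ‖v‖ = 1 ∧ LipschitzWith K g ∧
    ∀ z ∈ ball x r, (z ∈ X ↔ g (z - ⟪z, v⟫ • v) ≤ ⟪z, v⟫)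

/-- The `(q,1)`-Poincaré–Wirtinger inequality with constant `CPW`. -/
def PWIneq {n : ℕ} (μ : Measure (Euc n)) (q CPW : ℝ) : Prop :=
  ∀ f : Euc n → ℝ, ContDiff ℝ 1 f →
    (∫ x, |f x - ∫ z, f z ∂μ| ^ q ∂μ) ^ (1 / q) ≤ CPW * ∫ x, ‖gradient f x‖ ∂μ

/-- Loeper's condition (QC): for each `i`, a convex set `X_i` together with a `C²`
diffeomorphism `exp_i^c : X_i → X` such that all sublevel sets
`{p ∈ X_i : -c(exp_i^c p, y_k) + c(exp_i^c p, y_i) ≤ t}` are convex. -/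
structure LoeperSystem {n N : ℕ} (X : Set (Euc n)) (c : Euc n → Fin N → ℝ) where
  dom : Fin N → Set (Euc n)
  exp : Fin N → Euc n → Euc n
  expInv : Fin N → Euc n → Euc n
  convex_dom : ∀ i, Convex ℝ (dom i)
  contDiffOn_exp : ∀ i, ContDiffOn ℝ 2 (exp i) (dom i)
  contDiffOn_expInv : ∀ i, ContDiffOn ℝ 2 (expInv i) X
  mapsTo_exp : ∀ i, MapsTo (exp i) (dom i) X
  mapsTo_expInv : ∀ i, MapsTo (expInv i) X (dom i)
  left_inv : ∀ i, ∀ p ∈ dom i, expInv i (exp i p) = p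
  right_inv : ∀ i, ∀ z ∈ X, exp i (expInv i z) = z
  sublevel_convex : ∀ i k : Fin N, ∀ t : ℝ,
    Convex ℝ {p ∈ dom i | -(c (exp i p) k) + c (exp i p) i ≤ t}

/-- `(T, λ)` minimizes the semi-discrete optimal transport problem with storage fee
given by the convex indicator function of the set `S`. -/
def IsOptimalPair {n N : ℕ} (μ : Measure (Euc n)) (c : Euc n → Fin N → ℝ)
    (T : Euc n → Fin N) (lam : Fin N → ℝ) (S : Set (Fin N → ℝ)) : Prop :=
  Measurable T ∧ (∀ i, μ (T ⁻¹' {i}) = ENNReal.ofReal (lam i)) ∧ lam ∈ S ∧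
    ∀ (T' : Euc n → Fin N) (lam' : Fin N → ℝ), Measurable T' →
      (∀ i, μ (T' ⁻¹' {i}) = ENNReal.ofReal (lam' i)) → lam' ∈ S →
      ∫ x, c x (T x) ∂μ ≤ ∫ x, c x (T' x) ∂μ

/-- The support of a measure. -/
def msupport {n : ℕ} (μ : Measure (Euc n)) : Set (Euc n) :=
  {x | ∀ U ∈ nhds x, 0 < μ U}

/-- The pseudo `c`-transform `φ^{c†}` of a function `φ`. -/
def cDagger {n N : ℕ} (μ : Measure (Euc n)) (c : Euc n → Fin N → ℝ) (φ : Euc n → ℝ) :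
    Fin N → ℝ :=
  fun i => sSup ((fun x => -(c x i) - φ x) '' msupport μ)

open scoped Manifold

set_option maxHeartbeats 1000000 in
lemma levelset_null' {n : ℕ} {f : Euc n → ℝ} (hf : ContDiff ℝ 1 f)
    {X : Set (Euc n)} (hX : IsCompact X)
    (hgrad : ∀ x ∈ X, fderiv ℝ f x ≠ 0) (t : ℝ) :
    volume {x ∈ X | f x = t} = 0 := by
  classical
  set S : Set (Euc n) := {x ∈ X | f x = t} with hSdef
  have hSX : S ⊆ X := fun x hx => hx.1
  have hSeq : S = X ∩ f ⁻¹' {t} := by ext x; simp [hSdef, and_comm]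
  have hSclosed : IsClosed S := by
    rw [hSeq]; exact hX.isClosed.inter (isClosed_singleton.preimage hf.continuous)
  have hScpt : IsCompact S := hX.of_isClosed_subset hSclosed hSX
  -- local statement
  have key : ∀ x₀ ∈ S, ∃ U : Set (Euc n), IsOpen U ∧ x₀ ∈ U ∧ volume (S ∩ U) = 0 := by
    intro x₀ hx₀
    set ℓ : Euc n →L[ℝ] ℝ := fderiv ℝ f x₀ with hℓdef
    have hℓ : ℓ ≠ 0 := hgrad x₀ (hSX hx₀)
    obtain ⟨w, hw⟩ : ∃ w, ℓ w ≠ 0 := by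
      by_contra h
      push_neg at h
      exact hℓ (ContinuousLinearMap.ext fun w => by simp [h w])
    set e : Euc n := (ℓ w)⁻¹ • w with hedef
    have hle : ℓ e = 1 := by
      simp [hedef, ContinuousLinearMap.map_smul, smul_eq_mul, inv_mul_cancel₀ hw]
    set Φ : Euc n → Euc n := fun x => x + (f x - ℓ x) • e with hΦdef
    have hdiff : Differentiable ℝ f := hf.differentiable one_ne_zero
    -- derivative of Φ at a general point
    set A : Euc n → (Euc n →L[ℝ] Euc n) :=
      fun x => ContinuousLinearMap.id ℝ (Euc n) + (fderiv ℝ f x - ℓ).smulRight e with hAdef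
    have hΦderiv : ∀ x : Euc n, HasFDerivAt Φ (A x) x := by
      intro x
      have h1 : HasFDerivAt (fun y => f y - ℓ y) (fderiv ℝ f x - ℓ) x :=
        (hdiff x).hasFDerivAt.sub ℓ.hasFDerivAt
      have h2 := h1.smul_const e
      exact (hasFDerivAt_id x).add h2
    -- strict derivative at x₀ is the identity
    have hA0 : A x₀ = ContinuousLinearMap.id ℝ (Euc n) := by
      simp [hAdef, hℓdef, sub_self]
    have hstrict : HasStrictFDerivAt Φ
        ((ContinuousLinearEquiv.refl ℝ (Euc n) : Euc n ≃L[ℝ] Euc n) :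
          Euc n →L[ℝ] Euc n) x₀ := by
      have h1 : HasStrictFDerivAt (fun y => f y - ℓ y) (ℓ - ℓ) x₀ :=
        (hf.contDiffAt.hasStrictFDerivAt one_ne_zero).sub ℓ.hasStrictFDerivAt
      have h2 := h1.smul_const e
      have h3 := (hasStrictFDerivAt_id x₀).add h2
      have : ContinuousLinearMap.id ℝ (Euc n) + (ℓ - ℓ).smulRight e
          = ((ContinuousLinearEquiv.refl ℝ (Euc n) : Euc n ≃L[ℝ] Euc n) :
            Euc n →L[ℝ] Euc n) := by
        apply ContinuousLinearMap.ext
        intro v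
        simp [ContinuousLinearMap.smulRight_apply]
      rwa [this] at h3
    set p := hstrict.toOpenPartialHomeomorph Φ with hpdef
    have hx₀src : x₀ ∈ p.source := hstrict.mem_toOpenPartialHomeomorph_source
    -- continuity of the determinant of A
    have hAcont : Continuous fun x => (A x).det := by
      apply ContinuousLinearMap.continuous_det.comp
      apply Continuous.add continuous_const
      have hsm : Continuous fun x => (fderiv ℝ f x - ℓ) :=
        (hf.continuous_fderiv one_ne_zero).sub continuous_const
      have h2 := (((ContinuousLinearMap.smulRightL ℝ (Euc n) (Euc n)).flip e).continuous).comp hsm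
      exact h2
    have hdet0 : (A x₀).det = 1 := by
      rw [hA0]
      simp [ContinuousLinearMap.det]
    set U : Set (Euc n) := p.source ∩ (fun x => (A x).det) ⁻¹' (Set.Ioi (1/2 : ℝ)) with hUdef
    have hUopen : IsOpen U := p.open_source.inter (isOpen_Ioi.preimage hAcont)
    have hx₀U : x₀ ∈ U := ⟨hx₀src, by simp [hdet0]; norm_num⟩
    refine ⟨U, hUopen, hx₀U, ?_⟩
    set E : Set (Euc n) := S ∩ U with hEdef
    have hEmeas : MeasurableSet E := hSclosed.measurableSet.inter hUopen.measurableSet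
    have hFD : ∀ x ∈ E, HasFDerivWithinAt Φ (A x) E x :=
      fun x _ => (hΦderiv x).hasFDerivWithinAt
    have hInj : Set.InjOn Φ E := p.injOn.mono fun x hx => hx.2.1
    -- the image lands in a null hyperplane
    set P : Set (Euc n) := {z | ℓ z = t} with hPdef
    have himg : Φ '' E ⊆ P := by
      rintro _ ⟨x, hx, rfl⟩
      have hxS : x ∈ S := hx.1
      have : ℓ (Φ x) = t := by
        have hfx : f x = t := hxS.2
        simp only [hΦdef, map_add, ContinuousLinearMap.map_smul, smul_eq_mul, hle, mul_one]
        linarith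
      exact this
    have hPnull : volume P = 0 := by
      have hker : ((t • e) + ·) ⁻¹' P = (LinearMap.ker (ℓ : Euc n →ₗ[ℝ] ℝ) : Set (Euc n)) := by
        ext z
        simp only [hPdef, Set.mem_preimage, Set.mem_setOf_eq, map_add,
          ContinuousLinearMap.map_smul, smul_eq_mul, hle, mul_one, SetLike.mem_coe,
          LinearMap.mem_ker, ContinuousLinearMap.coe_coe]
        constructor
        · intro h; linarith [h]
        · intro h
          have : (ℓ : Euc n →ₗ[ℝ] ℝ) z = 0 := h
          simp only [ContinuousLinearMap.coe_coe] at this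
          linarith [this]
      have h1 : volume ((fun z => (t • e) + z) ⁻¹' P) = volume P :=
        measure_preimage_add volume (t • e) P
      rw [← h1, hker]
      apply Measure.addHaar_submodule
      intro htop
      have : e ∈ LinearMap.ker (ℓ : Euc n →ₗ[ℝ] ℝ) := htop ▸ Submodule.mem_top
      have : (ℓ : Euc n →ₗ[ℝ] ℝ) e = 0 := this
      simp only [ContinuousLinearMap.coe_coe] at this
      rw [hle] at this
      norm_num at this
    -- Jacobian change of variables
    have hchg : (∫⁻ x in E, ENNReal.ofReal |(A x).det| ∂volume) = volume (Φ '' E) :=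
      lintegral_abs_det_fderiv_eq_addHaar_image volume hEmeas hFD hInj
    have hup : volume (Φ '' E) = 0 :=
      le_antisymm ((measure_mono himg).trans hPnull.le) zero_le'
    have hlow : ENNReal.ofReal (1/2 : ℝ) * volume E ≤ ∫⁻ x in E, ENNReal.ofReal |(A x).det| ∂volume := by
      rw [← setLIntegral_const E (ENNReal.ofReal (1/2 : ℝ))]
      apply setLIntegral_mono (ENNReal.continuous_ofReal.comp hAcont.abs).measurable
      intro x hx
      apply ENNReal.ofReal_le_ofReal
      have : (1/2 : ℝ) < (A x).det := hx.2.2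
      calc (1/2 : ℝ) ≤ (A x).det := this.le
        _ ≤ |(A x).det| := le_abs_self _
    rw [hchg, hup] at hlow
    have := le_antisymm hlow zero_le'
    rcases mul_eq_zero.mp this with h | h
    · exfalso
      rw [ENNReal.ofReal_eq_zero] at h
      norm_num at h
    · exact h
  -- compactness: extract a finite subcover
  choose! U hUopen hUmem hUnull using key
  have hcover : S ⊆ ⋃ x ∈ S, U x := fun x hx => Set.mem_biUnion hx (hUmem x hx)
  obtain ⟨T, hT⟩ := hScpt.elim_finite_subcover_image (fun x hx => hUopen x hx) hcover
  obtain ⟨hTS, hTfin, hTcov⟩ := hT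
  have : S ⊆ ⋃ x ∈ hTfin.toFinset, (S ∩ U x) := by
    intro y hy
    obtain ⟨x, hx, hyx⟩ := Set.mem_iUnion₂.mp (hTcov hy)
    exact Set.mem_biUnion (hTfin.mem_toFinset.mpr hx) ⟨hy, hyx⟩
  refine le_antisymm ?_ zero_le'
  calc volume S ≤ volume (⋃ x ∈ hTfin.toFinset, (S ∩ U x)) := measure_mono this
    _ ≤ ∑ x ∈ hTfin.toFinset, volume (S ∩ U x) := measure_biUnion_finset_le _ _
    _ = 0 := by
      apply Finset.sum_eq_zero
      intro x hx
      exact hUnull x (hTS (hTfin.mem_toFinset.mp hx))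

section Helpers

variable {n N : ℕ}

lemma le_cStar (c : Euc n → Fin N → ℝ) (ψ : Fin N → ℝ) (x : Euc n) (i : Fin N) :
    -(c x i) - ψ i ≤ cStar c ψ x :=
  le_ciSup (f := fun i => -(c x i) - ψ i) (Set.Finite.bddAbove (Set.finite_range _)) i

lemma cStar_exists (hN : 0 < N) (c : Euc n → Fin N → ℝ) (ψ : Fin N → ℝ) (x : Euc n) :
    ∃ i, cStar c ψ x = -(c x i) - ψ i := by
  haveI : Nonempty (Fin N) := ⟨⟨0, hN⟩⟩
  obtain ⟨i, hi⟩ := Finite.exists_max fun i => -(c x i) - ψ i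
  exact ⟨i, le_antisymm (ciSup_le hi) (le_cStar c ψ x i)⟩

lemma cStar_continuous (hN : 0 < N) (c : Euc n → Fin N → ℝ)
    (hc : ∀ i, Continuous fun x => c x i) (ψ : Fin N → ℝ) :
    Continuous (cStar c ψ) := by
  haveI : Nonempty (Fin N) := ⟨⟨0, hN⟩⟩
  have heq : cStar c ψ
      = fun x => Finset.univ.sup' Finset.univ_nonempty (fun i => -(c x i) - ψ i) :=
    funext fun x => (Finset.sup'_univ_eq_ciSup _).symm
  rw [heq]
  exact Continuous.finset_sup'_apply _ fun i _ => ((hc i).neg.sub continuous_const)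

lemma lag_isClosed (hN : 0 < N) {X : Set (Euc n)} (hX : IsClosed X)
    {c : Euc n → Fin N → ℝ} (hc : ∀ i, Continuous fun x => c x i)
    (ψ : Fin N → ℝ) (i : Fin N) : IsClosed (Lag X c ψ i) := by
  have heq : Lag X c ψ i = X ∩ {x | -(c x i) - ψ i = cStar c ψ x} := rfl
  rw [heq]
  exact hX.inter (isClosed_eq ((hc i).neg.sub continuous_const)
    (cStar_continuous hN c hc ψ))

lemma lag_cover (hN : 0 < N) (X : Set (Euc n)) (c : Euc n → Fin N → ℝ)
    (ψ : Fin N → ℝ) {x : Euc n} (hx : x ∈ X) : ∃ i, x ∈ Lag X c ψ i := by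
  obtain ⟨i, hi⟩ := cStar_exists hN c ψ x
  exact ⟨i, hx, hi.symm⟩

lemma msupport_isClosed (μ : Measure (Euc n)) : IsClosed (msupport μ) := by
  rw [← isOpen_compl_iff, isOpen_iff_mem_nhds]
  intro x hx
  simp only [msupport, mem_compl_iff, mem_setOf_eq, not_forall] at hx
  obtain ⟨U, hU, hU0⟩ := hx
  have hμU : μ (interior U) = 0 := by
    have : μ U = 0 := by simpa [not_lt, le_zero_iff] using hU0
    exact measure_mono_null interior_subset this
  refine mem_of_superset (interior_mem_nhds.mpr hU) ?_
  intro y hy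
  simp only [msupport, mem_compl_iff, mem_setOf_eq, not_forall]
  exact ⟨interior U, isOpen_interior.mem_nhds hy, by simp [hμU]⟩

lemma msupport_compl_null (μ : Measure (Euc n)) : μ (msupport μ)ᶜ = 0 := by
  have h : ∀ x : ↥(msupport μ)ᶜ, ∃ V : Set (Euc n),
      IsOpen V ∧ (x : Euc n) ∈ V ∧ μ V = 0 := by
    rintro ⟨x, hx⟩
    simp only [msupport, mem_compl_iff, mem_setOf_eq, not_forall] at hx
    obtain ⟨U, hU, hU0⟩ := hx
    refine ⟨interior U, isOpen_interior, mem_interior_iff_mem_nhds.mpr hU, ?_⟩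
    have : μ U = 0 := by simpa [not_lt, le_zero_iff] using hU0
    exact measure_mono_null interior_subset this
  choose V hVopen hVmem hVnull using h
  obtain ⟨T, hTct, hTeq⟩ := TopologicalSpace.isOpen_iUnion_countable V hVopen
  have hsub : (msupport μ)ᶜ ⊆ ⋃ i ∈ T, V i := by
    rw [hTeq]
    intro x hx
    exact Set.mem_iUnion.mpr ⟨⟨x, hx⟩, hVmem _⟩
  refine measure_mono_null hsub ?_
  exact (measure_biUnion_null_iff hTct).mpr fun i _ => hVnull i

lemma lag_overlap_null {X : Set (Euc n)} (hXcpt : IsCompact X)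
    {c : Euc n → Fin N → ℝ} (hreg : Reg c) (htwist : Twist X c)
    (μ : Measure (Euc n)) (hac : μ ≪ (volume : Measure (Euc n)))
    (ψ : Fin N → ℝ) {i k : Fin N} (hik : i ≠ k) :
    μ (Lag X c ψ i ∩ Lag X c ψ k) = 0 := by
  set f : Euc n → ℝ := fun x => c x i - c x k with hfdef
  have hfc : ContDiff ℝ 1 f := ((hreg i).of_le one_le_two).sub ((hreg k).of_le one_le_two)
  have hsub : Lag X c ψ i ∩ Lag X c ψ k ⊆ {x ∈ X | f x = ψ k - ψ i} := by
    rintro x ⟨hxi, hxk⟩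
    refine ⟨hxi.1, ?_⟩
    have h12 : -(c x i) - ψ i = -(c x k) - ψ k := hxi.2.trans hxk.2.symm
    simp only [hfdef]
    linarith
  have hgrad : ∀ x ∈ X, fderiv ℝ f x ≠ 0 := by
    intro x hx h0
    apply htwist x hx i k hik
    have hdi : DifferentiableAt ℝ (fun z => c z i) x :=
      ((hreg i).differentiable two_ne_zero).differentiableAt
    have hdk : DifferentiableAt ℝ (fun z => c z k) x :=
      ((hreg k).differentiable two_ne_zero).differentiableAt
    have hfd : fderiv ℝ f x
        = fderiv ℝ (fun z => c z i) x - fderiv ℝ (fun z => c z k) x := fderiv_sub hdi hdk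
    rw [hfd] at h0
    have heq : fderiv ℝ (fun z => c z i) x = fderiv ℝ (fun z => c z k) x := sub_eq_zero.mp h0
    unfold gradient
    rw [heq]
  exact hac (measure_mono_null hsub (levelset_null' hfc hXcpt hgrad _))

end Helpers

set_option maxHeartbeats 1000000 in
/-- **Lemma 3.3: injectivity of `G` modulo constants.** -/
theorem stmt11 {n N : ℕ} (hn : 2 ≤ n) (hN : 0 < N)
    (X : Set (Euc n)) (hXcpt : IsCompact X) (hXlip : HasLipschitzBoundary X)
    (c : Euc n → Fin N → ℝ) (hreg : Reg c) (htwist : Twist X c)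
    (ρ : Euc n → ℝ) (hρcont : ContinuousOn ρ X) (hρ0 : ∀ x ∉ X, ρ x = 0)
    (hρnn : ∀ x, 0 ≤ ρ x)
    (μ : Measure (Euc n)) [IsProbabilityMeasure μ]
    (hμ : μ = volume.withDensity fun x => ENNReal.ofReal (ρ x))
    (hPW : ∃ CPW : ℝ, 0 < CPW ∧ PWIneq μ 1 CPW)
    (ψ₁ ψ₂ : Fin N → ℝ)
    (hψ₁ : ψ₁ = cDagger μ c (cStar c ψ₁)) (hψ₂ : ψ₂ = cDagger μ c (cStar c ψ₂)) :
    (∃ r : ℝ, ∀ i, ψ₁ i - ψ₂ i = r) ↔ ∀ i, Gmap μ X c ψ₁ i = Gmap μ X c ψ₂ i := by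
  classical
  haveI : Nonempty (Fin N) := ⟨⟨0, hN⟩⟩
  have hccont : ∀ i, Continuous fun x => c x i := fun i => (hreg i).continuous
  constructor
  · -- easy direction
    rintro ⟨r, hr⟩ i
    have hcs : ∀ x, cStar c ψ₁ x = cStar c ψ₂ x - r := by
      intro x
      apply le_antisymm
      · apply ciSup_le
        intro j
        have h1 := le_cStar c ψ₂ x j
        have h2 := hr j
        linarith
      · rw [sub_le_iff_le_add]
        apply ciSup_le
        intro j
        have h1 := le_cStar c ψ₁ x j
        have h2 := hr j
        linarith
    have hLag : Lag X c ψ₁ i = Lag X c ψ₂ i := by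
      ext x
      constructor
      · rintro ⟨hxX, hxe⟩
        refine ⟨hxX, ?_⟩
        rw [hcs x] at hxe
        have h2 := hr i
        linarith
      · rintro ⟨hxX, hxe⟩
        refine ⟨hxX, ?_⟩
        rw [hcs x]
        have h2 := hr i
        linarith
    unfold Gmap
    rw [hLag]
  · -- hard direction
    intro hG
    -- setup
    have hac : μ ≪ (volume : Measure (Euc n)) := by
      rw [hμ]; exact withDensity_absolutelyContinuous volume _
    have hXmeas : MeasurableSet X := hXcpt.isClosed.measurableSet
    have hXc_null : μ Xᶜ = 0 := by
      rw [hμ, withDensity_apply _ hXmeas.compl]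
      have hz : ∀ x ∈ Xᶜ, ENNReal.ofReal (ρ x) = (0 : ℝ≥0∞) := fun x hx => by
        simp [hρ0 x hx]
      calc ∫⁻ x in Xᶜ, ENNReal.ofReal (ρ x) ∂volume
          = ∫⁻ _ in Xᶜ, (0 : ℝ≥0∞) ∂volume :=
            setLIntegral_congr_fun hXmeas.compl hz
        _ = 0 := by simp
    set K : Set (Euc n) := msupport μ with hKdef
    have hKclosed : IsClosed K := msupport_isClosed μ
    have hKcompl : μ Kᶜ = 0 := msupport_compl_null μ
    have hKX : K ⊆ X := by
      intro x hx
      by_contra hxX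
      have hXc : Xᶜ ∈ nhds x := hXcpt.isClosed.isOpen_compl.mem_nhds hxX
      have := hx Xᶜ hXc
      rw [hXc_null] at this
      exact lt_irrefl 0 this
    have hKcpt : IsCompact K := hXcpt.of_isClosed_subset hKclosed hKX
    have hKne : K.Nonempty := by
      rw [Set.nonempty_iff_ne_empty]
      intro hemp
      have : μ Set.univ = 0 := by
        have : (K : Set (Euc n))ᶜ = Set.univ := by rw [hemp]; simp
        rw [← this]; exact hKcompl
      simp [measure_univ] at this
    -- basic functions
    set h : Euc n → ℝ := fun x => cStar c ψ₁ x - cStar c ψ₂ x with hhdef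
    have hhcont : Continuous h :=
      (cStar_continuous hN c hccont ψ₁).sub (cStar_continuous hN c hccont ψ₂)
    set v : Fin N → ℝ := fun i => ψ₂ i - ψ₁ i with hvdef
    have hμLag : ∀ i, μ (Lag X c ψ₁ i) = μ (Lag X c ψ₂ i) := by
      intro i
      have := hG i
      unfold Gmap at this
      exact (ENNReal.toReal_eq_toReal_iff' (measure_ne_top μ _) (measure_ne_top μ _)).mp this
    have fact1 : ∀ x, ∀ i, x ∈ Lag X c ψ₁ i → h x ≤ v i := by
      intro x i hx
      have h1 : -(c x i) - ψ₁ i = cStar c ψ₁ x := hx.2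
      have h2 := le_cStar c ψ₂ x i
      simp only [hhdef, hvdef]
      linarith
    have fact2 : ∀ x, ∀ k, x ∈ Lag X c ψ₂ k → v k ≤ h x := by
      intro x k hx
      have h1 : -(c x k) - ψ₂ k = cStar c ψ₂ x := hx.2
      have h2 := le_cStar c ψ₁ x k
      simp only [hhdef, hvdef]
      linarith
    have hlagmeas : ∀ (ψ : Fin N → ℝ) (i : Fin N), MeasurableSet (Lag X c ψ i) :=
      fun ψ i => (lag_isClosed hN hXcpt.isClosed hccont ψ i).measurableSet
    -- the bad null sets
    have hDs : ∀ j : Fin N,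
        μ ({x ∈ X | v j < h x}
          \ ⋃ k ∈ Finset.univ.filter (fun k => v j < v k), Lag X c ψ₂ k) = 0 := by
      intro j
      set Fs := Finset.univ.filter (fun k => v j < v k) with hFsdef
      set Hs : Set (Euc n) := {x ∈ X | v j < h x} with hHsdef
      set E₁ : Set (Euc n) := ⋃ k ∈ Fs, Lag X c ψ₁ k with hE₁def
      set E₂ : Set (Euc n) := ⋃ k ∈ Fs, Lag X c ψ₂ k with hE₂def
      have hHsE₁ : Hs ⊆ E₁ := by
        rintro x ⟨hxX, hxs⟩
        obtain ⟨i, hi⟩ := lag_cover hN X c ψ₁ hxX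
        have hvi : v j < v i := lt_of_lt_of_le hxs (fact1 x i hi)
        exact Set.mem_biUnion (Finset.mem_filter.mpr ⟨Finset.mem_univ _, hvi⟩) hi
      have hE₂Hs : E₂ ⊆ Hs := by
        intro x hx
        obtain ⟨k, hk, hxk⟩ := Set.mem_iUnion₂.mp hx
        have hvk : v j < v k := (Finset.mem_filter.mp hk).2
        exact ⟨hxk.1, lt_of_lt_of_le hvk (fact2 x k hxk)⟩
      have hE₂meas : MeasurableSet E₂ :=
        Finset.measurableSet_biUnion _ (fun k _ => hlagmeas ψ₂ k)
      have hμE₂ : μ E₂ = ∑ k ∈ Fs, μ (Lag X c ψ₂ k) := by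
        apply measure_biUnion_finset₀
        · intro a _ b _ hab
          exact lag_overlap_null hXcpt hreg htwist μ hac ψ₂ hab
        · exact fun k _ => (hlagmeas ψ₂ k).nullMeasurableSet
      have hchain : μ Hs ≤ μ E₂ := by
        calc μ Hs ≤ μ E₁ := measure_mono hHsE₁
          _ ≤ ∑ k ∈ Fs, μ (Lag X c ψ₁ k) := measure_biUnion_finset_le _ _
          _ = ∑ k ∈ Fs, μ (Lag X c ψ₂ k) := Finset.sum_congr rfl fun k _ => hμLag k
          _ = μ E₂ := hμE₂.symm
      have heq : μ Hs = μ E₂ := le_antisymm hchain (measure_mono hE₂Hs)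
      rw [measure_diff hE₂Hs hE₂meas.nullMeasurableSet (measure_ne_top μ _), heq,
        tsub_self]
    -- a.e. x in X, h x is a value of v
    set Bad : Set (Euc n) := Xᶜ ∪ ⋃ j, ({x ∈ X | v j < h x}
      \ ⋃ k ∈ Finset.univ.filter (fun k => v j < v k), Lag X c ψ₂ k) with hBaddef
    have hBadnull : μ Bad = 0 := by
      apply measure_union_null hXc_null
      exact measure_iUnion_null fun j => hDs j
    have hgood : ∀ x, x ∉ Bad → h x ∈ Set.range v := by
      intro x hx
      have hxX : x ∈ X := by
        by_contra hxX
        exact hx (Set.mem_union_left _ hxX)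
      have hxD : ∀ j, x ∉ ({x ∈ X | v j < h x}
          \ ⋃ k ∈ Finset.univ.filter (fun k => v j < v k), Lag X c ψ₂ k) := by
        intro j hj
        exact hx (Set.mem_union_right _ (Set.mem_iUnion.mpr ⟨j, hj⟩))
      set I₂ := Finset.univ.filter (fun k => x ∈ Lag X c ψ₂ k) with hI₂def
      have hI₂ne : I₂.Nonempty := by
        obtain ⟨k, hk⟩ := lag_cover hN X c ψ₂ hxX
        exact ⟨k, Finset.mem_filter.mpr ⟨Finset.mem_univ _, hk⟩⟩
      obtain ⟨k₀, hk₀I, hk₀max⟩ := Finset.exists_max_image I₂ v hI₂ne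
      have hk₀mem : x ∈ Lag X c ψ₂ k₀ := (Finset.mem_filter.mp hk₀I).2
      have hlow : v k₀ ≤ h x := fact2 x k₀ hk₀mem
      rcases eq_or_lt_of_le hlow with heq | hlt
      · exact ⟨k₀, heq⟩
      · exfalso
        apply hxD k₀
        refine ⟨⟨hxX, hlt⟩, ?_⟩
        intro hmem
        obtain ⟨k, hk, hxk⟩ := Set.mem_iUnion₂.mp hmem
        have h1 : v k₀ < v k := (Finset.mem_filter.mp hk).2
        have h2 : k ∈ I₂ := Finset.mem_filter.mpr ⟨Finset.mem_univ _, hxk⟩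
        exact absurd (hk₀max k h2) (not_le.mpr h1)
    -- h maps the support into the range of v
    have hKrange : ∀ x ∈ K, h x ∈ Set.range v := by
      intro x hx
      have hcl : h x ∈ closure (Set.range v) := by
        rw [Metric.mem_closure_iff]
        intro ε hε
        obtain ⟨δ, hδpos, hδ⟩ := Metric.continuousAt_iff.mp hhcont.continuousAt ε hε
        have hball : 0 < μ (ball x δ) := hx (ball x δ) (ball_mem_nhds x hδpos)
        have : ∃ y ∈ ball x δ, y ∉ Bad := by
          by_contra hcon
          push_neg at hcon
          have : μ (ball x δ) = 0 := measure_mono_null hcon hBadnull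
          rw [this] at hball
          exact lt_irrefl 0 hball
        obtain ⟨y, hyball, hyBad⟩ := this
        refine ⟨h y, hgood y hyBad, ?_⟩
        have := hδ (mem_ball.mp hyball)
        rwa [dist_comm] at this
      rwa [((Set.finite_range v).isClosed).closure_eq] at hcl
    -- h is constant on the support
    obtain ⟨x₀, hx₀K⟩ := hKne
    -- positivity of pieces
    have hposKt : ∀ x ∈ K, 0 < μ (K ∩ h ⁻¹' {h x}) := by
      intro x hxK
      set Fv := Finset.univ.image v with hFvdef
      have hCclosed : IsClosed (↑(Fv.erase (h x)) : Set ℝ) :=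
        (Fv.erase (h x)).finite_toSet.isClosed
      have hxnot : h x ∉ (↑(Fv.erase (h x)) : Set ℝ) := by
        simp [Finset.mem_erase]
      obtain ⟨ε, hεpos, hεball⟩ :=
        Metric.isOpen_iff.mp hCclosed.isOpen_compl (h x) hxnot
      obtain ⟨δ, hδpos, hδ⟩ := Metric.continuousAt_iff.mp hhcont.continuousAt ε hεpos
      have hsub : ball x δ ∩ K ⊆ K ∩ h ⁻¹' {h x} := by
        rintro y ⟨hyb, hyK⟩
        refine ⟨hyK, ?_⟩
        have hyr : h y ∈ Set.range v := hKrange y hyK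
        have hyFv : h y ∈ Fv := by
          obtain ⟨k, hk⟩ := hyr
          exact Finset.mem_image.mpr ⟨k, Finset.mem_univ _, hk⟩
        have hdist : dist (h y) (h x) < ε := hδ (mem_ball.mp hyb)
        have : h y ∈ (↑(Fv.erase (h x)) : Set ℝ)ᶜ := hεball (mem_ball.mpr hdist)
        simp only [Set.mem_compl_iff, Finset.coe_erase, Set.mem_diff, not_and,
          Finset.mem_coe] at this
        by_contra hne
        exact (this hyFv) (by simpa using hne)
      have hball : 0 < μ (ball x δ) := hxK (ball x δ) (ball_mem_nhds x hδpos)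
      have hsplit : μ (ball x δ) ≤ μ (ball x δ ∩ K) := by
        calc μ (ball x δ) = μ ((ball x δ ∩ K) ∪ (ball x δ ∩ Kᶜ)) := by
              rw [Set.inter_union_compl]
          _ ≤ μ (ball x δ ∩ K) + μ (ball x δ ∩ Kᶜ) := measure_union_le _ _
          _ ≤ μ (ball x δ ∩ K) + 0 := by
              gcongr
              exact (measure_mono_null Set.inter_subset_right hKcompl).le
          _ = μ (ball x δ ∩ K) := by rw [add_zero]
      exact lt_of_lt_of_le (lt_of_lt_of_le hball hsplit) (measure_mono hsub)
    have hconst : ∀ x ∈ K, h x = h x₀ := by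
      by_contra hne
      push_neg at hne
      obtain ⟨x₁, hx₁K, hx₁ne⟩ := hne
      -- two disjoint nonempty compact pieces
      set t₁ : ℝ := h x₁ with ht₁def
      set Fv := Finset.univ.image v with hFvdef
      set K₁ : Set (Euc n) := K ∩ h ⁻¹' {t₁} with hK₁def
      set K₂ : Set (Euc n) := K ∩ h ⁻¹' (↑(Fv.erase t₁) : Set ℝ) with hK₂def
      have hK₁closed : IsClosed K₁ :=
        hKclosed.inter (isClosed_singleton.preimage hhcont)
      have hK₂closed : IsClosed K₂ :=
        hKclosed.inter (((Fv.erase t₁).finite_toSet.isClosed).preimage hhcont)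
      have hK₁cpt : IsCompact K₁ := hKcpt.of_isClosed_subset hK₁closed Set.inter_subset_left
      have hKcover : K ⊆ K₁ ∪ K₂ := by
        intro x hxK
        have hxr := hKrange x hxK
        have hxFv : h x ∈ Fv := by
          obtain ⟨k, hk⟩ := hxr
          exact Finset.mem_image.mpr ⟨k, Finset.mem_univ _, hk⟩
        by_cases hcase : h x = t₁
        · exact Or.inl ⟨hxK, hcase⟩
        · exact Or.inr ⟨hxK, by simp [Finset.mem_erase, hcase, hxFv]⟩
      have hdisjK : Disjoint K₁ K₂ := by
        rw [Set.disjoint_left]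
        rintro x ⟨_, hx1⟩ ⟨_, hx2⟩
        have h1 : h x = t₁ := hx1
        have h2 : h x ∈ (↑(Fv.erase t₁) : Set ℝ) := hx2
        simp only [Finset.coe_erase, Set.mem_diff, Set.mem_singleton_iff] at h2
        exact h2.2 h1
      obtain ⟨δ, hδpos, hδdisj⟩ := hdisjK.exists_cthickenings hK₁cpt hK₂closed
      -- smooth Urysohn function
      obtain ⟨f, hf0, hf1, hfIcc⟩ :=
        exists_contMDiffMap_zero_one_of_isClosed (𝓘(ℝ, Euc n)) (n := ⊤)
          isClosed_cthickening isClosed_cthickening hδdisj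
      have hfC1 : ContDiff ℝ 1 ⇑f := (contMDiff_iff_contDiff.mp f.contMDiff).of_le (by exact_mod_cast le_top)
      have hfcont : Continuous ⇑f := hfC1.continuous
      -- gradient vanishes on K
      have hgrad0 : ∀ x ∈ K, gradient ⇑f x = 0 := by
        intro x hxK
        rcases hKcover hxK with hx1 | hx2
        · have hxth : x ∈ thickening δ K₁ := self_subset_thickening hδpos _ hx1
          have hev : ⇑f =ᶠ[nhds x] (fun _ => (0 : ℝ)) := by
            filter_upwards [isOpen_thickening.mem_nhds hxth] with y hy
            exact hf0 (thickening_subset_cthickening δ K₁ hy)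
          rw [hev.gradient_eq]
          exact gradient_const x 0
        · have hxth : x ∈ thickening δ K₂ := self_subset_thickening hδpos _ hx2
          have hev : ⇑f =ᶠ[nhds x] (fun _ => (1 : ℝ)) := by
            filter_upwards [isOpen_thickening.mem_nhds hxth] with y hy
            exact hf1 (thickening_subset_cthickening δ K₂ hy)
          rw [hev.gradient_eq]
          exact gradient_const x 1
      have hRHS : ∫ x, ‖gradient ⇑f x‖ ∂μ = 0 := by
        apply integral_eq_zero_of_ae
        have hsub : {x | ¬ (fun x => ‖gradient ⇑f x‖) x = 0} ⊆ Kᶜ := by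
          intro x hx
          simp only [Set.mem_setOf_eq, norm_eq_zero] at hx
          intro hxK
          exact hx (hgrad0 x hxK)
        exact measure_mono_null hsub hKcompl
      -- integral bounds
      set m : ℝ := ∫ z, f z ∂μ with hmdef
      have hfint : Integrable ⇑f μ := by
        apply Integrable.mono' (integrable_const (1 : ℝ)) hfcont.aestronglyMeasurable
        apply Filter.Eventually.of_forall
        intro x
        rw [Real.norm_eq_abs, abs_le]
        constructor
        · linarith [(hfIcc x).1]
        · exact (hfIcc x).2
      have hm0 : 0 ≤ m := integral_nonneg fun x => (hfIcc x).1
      have hm1 : m ≤ 1 := by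
        have := integral_mono hfint (integrable_const (1 : ℝ)) fun x => (hfIcc x).2
        simpa [measure_univ] using this
      have habs_int : Integrable (fun x => |f x - m|) μ := (hfint.sub (integrable_const m)).abs
      -- lower bounds on the PW left-hand side
      have hsetK₁ : ∫ x in K₁, |f x - m| ∂μ = m * (μ K₁).toReal := by
        have : ∀ x ∈ K₁, |f x - m| = m := by
          intro x hx
          have hfx : f x = 0 := by simpa using hf0 (self_subset_cthickening _ hx)
          rw [hfx, zero_sub, abs_neg, abs_of_nonneg hm0]
        rw [setIntegral_congr_fun hK₁closed.measurableSet this, setIntegral_const]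
        simp [mul_comm, measureReal_def]
      have hsetK₂ : ∫ x in K₂, |f x - m| ∂μ = (1 - m) * (μ K₂).toReal := by
        have : ∀ x ∈ K₂, |f x - m| = 1 - m := by
          intro x hx
          have hfx : f x = 1 := by simpa using hf1 (self_subset_cthickening _ hx)
          rw [hfx, abs_of_nonneg (by linarith)]
        rw [setIntegral_congr_fun hK₂closed.measurableSet this, setIntegral_const]
        simp [mul_comm, measureReal_def]
      have hK₁pos : 0 < (μ K₁).toReal := by
        apply ENNReal.toReal_pos _ (measure_ne_top μ _)
        have := hposKt x₁ hx₁K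
        exact (lt_of_lt_of_le this le_rfl).ne'
      have hK₂pos : 0 < (μ K₂).toReal := by
        apply ENNReal.toReal_pos _ (measure_ne_top μ _)
        have hsub0 : K ∩ h ⁻¹' {h x₀} ⊆ K₂ := by
          rintro x ⟨hxK, hxh⟩
          refine ⟨hxK, ?_⟩
          have hxr := hKrange x hxK
          have hxFv : h x ∈ Fv := by
            obtain ⟨k, hk⟩ := hxr
            exact Finset.mem_image.mpr ⟨k, Finset.mem_univ _, hk⟩
          have hxval : h x = h x₀ := hxh
          have : h x ≠ t₁ := by rw [hxval]; exact fun hcon => hx₁ne hcon.symm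
          simp [Finset.mem_erase, this, hxFv]
        have := lt_of_lt_of_le (hposKt x₀ hx₀K) (measure_mono hsub0)
        exact this.ne'
      have hsetle₁ : ∫ x in K₁, |f x - m| ∂μ ≤ ∫ x, |f x - m| ∂μ :=
        setIntegral_le_integral habs_int (Filter.Eventually.of_forall fun x => abs_nonneg _)
      have hsetle₂ : ∫ x in K₂, |f x - m| ∂μ ≤ ∫ x, |f x - m| ∂μ :=
        setIntegral_le_integral habs_int (Filter.Eventually.of_forall fun x => abs_nonneg _)
      have hLHSpos : 0 < ∫ x, |f x - m| ∂μ := by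
        rcases le_or_gt m (1/2) with hcase | hcase
        · have : (1 - m) * (μ K₂).toReal > 0 := by
            apply mul_pos (by linarith) hK₂pos
          rw [hsetK₂] at hsetle₂
          linarith
        · have : m * (μ K₁).toReal > 0 := mul_pos (by linarith) hK₁pos
          rw [hsetK₁] at hsetle₁
          linarith
      -- apply the Poincaré–Wirtinger inequality
      obtain ⟨CPW, hCpos, hPWf⟩ := hPW
      have hPWap := hPWf ⇑f hfC1
      rw [hRHS, mul_zero] at hPWap
      have hone : (1 : ℝ) / 1 = 1 := by norm_num
      rw [hone, Real.rpow_one] at hPWap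
      simp only [Real.rpow_one] at hPWap
      rw [← hmdef] at hPWap
      linarith
    -- transfer back to ψ via the fixed point property
    refine ⟨-(cStar c ψ₁ x₀ - cStar c ψ₂ x₀), fun i => ?_⟩
    have hconst' : ∀ x ∈ K, cStar c ψ₁ x - cStar c ψ₂ x
        = cStar c ψ₁ x₀ - cStar c ψ₂ x₀ := fun x hx => hconst x hx
    set t₀ : ℝ := cStar c ψ₁ x₀ - cStar c ψ₂ x₀ with ht₀def
    have hcsK : ∀ x ∈ K, -(c x i) - cStar c ψ₂ x = (-(c x i) - cStar c ψ₁ x) + t₀ := by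
      intro x hx
      have := hconst' x hx
      linarith
    set g₁ : Euc n → ℝ := fun x => -(c x i) - cStar c ψ₁ x with hg₁def
    set g₂ : Euc n → ℝ := fun x => -(c x i) - cStar c ψ₂ x with hg₂def
    have hg₁cont : Continuous g₁ :=
      ((hccont i).neg).sub (cStar_continuous hN c hccont ψ₁)
    have hg₂cont : Continuous g₂ :=
      ((hccont i).neg).sub (cStar_continuous hN c hccont ψ₂)
    have hS₁ne : (g₁ '' K).Nonempty := ⟨g₁ x₀, ⟨x₀, hx₀K, rfl⟩⟩
    have hS₂ne : (g₂ '' K).Nonempty := ⟨g₂ x₀, ⟨x₀, hx₀K, rfl⟩⟩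
    have hS₁bdd : BddAbove (g₁ '' K) := (hKcpt.image hg₁cont).bddAbove
    have hS₂bdd : BddAbove (g₂ '' K) := (hKcpt.image hg₂cont).bddAbove
    have hval₁ : ψ₁ i = sSup (g₁ '' K) := by
      conv_lhs => rw [hψ₁]
      rfl
    have hval₂ : ψ₂ i = sSup (g₂ '' K) := by
      conv_lhs => rw [hψ₂]
      rfl
    have hkey : ψ₂ i = ψ₁ i + t₀ := by
      rw [hval₁, hval₂]
      apply le_antisymm
      · apply csSup_le hS₂ne
        rintro y ⟨x, hxK, rfl⟩
        have := hcsK x hxK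
        have hle : g₁ x ≤ sSup (g₁ '' K) := le_csSup hS₁bdd ⟨x, hxK, rfl⟩
        simp only [hg₂def, hg₁def] at this hle ⊢
        linarith
      · have hub : ∀ y ∈ g₁ '' K, y ≤ sSup (g₂ '' K) - t₀ := by
          rintro y ⟨x, hxK, rfl⟩
          have hc := hcsK x hxK
          have hle : g₂ x ≤ sSup (g₂ '' K) := le_csSup hS₂bdd ⟨x, hxK, rfl⟩
          simp only [hg₁def, hg₂def] at hc hle ⊢
          linarith
        have h2 := csSup_le hS₁ne hub
        linarith
    linarith [hkey]
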